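/- Fix α ∈ [0, 1/2) and let μ_n be a partition of n with at most n^α parts. Let (σ, τ) be uniform on K_{μ_n} × S_n. Letting f be the number of fixed points of the commutator [σ,τ], the probability that n > 2f (hence that S(σ,τ) is a visibility STS) is 1 − O(n²/2^{n/2}). -/

import Mathlib

open Equiv Equiv.Perm MulAction

def fullCycleType {n : ℕ} (σ : Equiv.Perm (Fin n)) : Multiset ℕ :=
  σ.cycleType + Multiset.replicate (n - σ.cycleType.sum) 1

lemma sum_cycleType_le {n : ℕ} (σ : Perm (Fin n)) : σ.cycleType.sum ≤ n := by
  rw [Equiv.Perm.sum_cycleType]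
  simpa using Finset.card_le_univ σ.support

lemma cycleType_eq_filter {n : ℕ} (σ : Perm (Fin n)) :
    (fullCycleType σ).filter (2 ≤ ·) = σ.cycleType := by
  rw [fullCycleType, Multiset.filter_add]
  have h1 : (Multiset.replicate (n - σ.cycleType.sum) 1).filter (2 ≤ ·) = 0 := by
    rw [Multiset.filter_eq_nil]
    intro a ha
    simp only [Multiset.eq_of_mem_replicate ha]
    omega
  have h2 : σ.cycleType.filter (2 ≤ ·) = σ.cycleType :=
    Multiset.filter_eq_self.2 fun a ha => Equiv.Perm.two_le_of_mem_cycleType ha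
  rw [h1, h2, add_zero]

lemma fullCycleType_eq_iff {n : ℕ} {σ ρ : Perm (Fin n)} :
    fullCycleType σ = fullCycleType ρ ↔ σ.cycleType = ρ.cycleType := by
  constructor
  · intro h
    rw [← cycleType_eq_filter σ, ← cycleType_eq_filter ρ, h]
  · intro h
    rw [fullCycleType, fullCycleType, h]

lemma fullCycleType_inv {n : ℕ} (σ : Perm (Fin n)) :
    fullCycleType σ⁻¹ = fullCycleType σ := by
  rw [fullCycleType, fullCycleType, Equiv.Perm.cycleType_inv]

lemma sum_fullCycleType {n : ℕ} (σ : Perm (Fin n)) : (fullCycleType σ).sum = n := by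
  rw [fullCycleType, Multiset.sum_add, Multiset.sum_replicate, smul_eq_mul, mul_one]
  have := _root_.sum_cycleType_le σ
  omega

lemma card_fullCycleType {n : ℕ} (σ : Perm (Fin n)) :
    Multiset.card (fullCycleType σ) = Multiset.card σ.cycleType + (n - σ.support.card) := by
  rw [fullCycleType, Multiset.card_add, Multiset.card_replicate, Equiv.Perm.sum_cycleType]

/-- existence -/
lemma exists_fullCycleType_eq {n : ℕ} (μ : Multiset ℕ) (hsum : μ.sum = n)
    (hpos : ∀ k ∈ μ, 1 ≤ k) : ∃ σ : Perm (Fin n), fullCycleType σ = μ := by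
  classical
  set ν := μ.filter (2 ≤ ·) with hν
  have hν2 : ∀ a ∈ ν, 2 ≤ a := fun a ha => (Multiset.mem_filter.1 ha).2
  have hsplit : μ = ν + μ.filter (¬ 2 ≤ ·) := (Multiset.filter_add_not _ μ).symm
  have hmsum : ν.sum + (μ.filter (¬ 2 ≤ ·)).sum = n := by
    rw [← hsum]; conv_rhs => rw [hsplit]
    rw [Multiset.sum_add]
  have hνsum : ν.sum ≤ n := by omega
  obtain ⟨σ, hσ⟩ := (Equiv.Perm.exists_with_cycleType_iff (Fin n)).2
    ⟨by simpa using hνsum, hν2⟩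
  refine ⟨σ, ?_⟩
  have hones : μ.filter (¬ 2 ≤ ·) = Multiset.replicate (Multiset.card (μ.filter (¬ 2 ≤ ·))) 1 := by
    rw [Multiset.eq_replicate_card]
    intro a ha
    have h1 := hpos a (Multiset.mem_of_mem_filter ha)
    have h2 := (Multiset.mem_filter.1 ha).2
    omega
  rw [fullCycleType, hσ]
  rw [hsplit]
  congr 1
  rw [hones]
  congr 1
  have : (μ.filter (¬ 2 ≤ ·)).sum = Multiset.card (μ.filter (¬ 2 ≤ ·)) := by
    conv_lhs => rw [hones]
    simp
  omega

section OrbStab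
variable {n : ℕ}

lemma card_orbit_mul_card_stab (σ : Perm (Fin n)) :
    Nat.card {ρ : Perm (Fin n) // fullCycleType ρ = fullCycleType σ} *
      Nat.card (stabilizer (ConjAct (Perm (Fin n))) σ) = n.factorial := by
  classical
  have e1 : {ρ : Perm (Fin n) // fullCycleType ρ = fullCycleType σ} ≃
      orbit (ConjAct (Perm (Fin n))) σ := by
    apply Equiv.subtypeEquivRight
    intro ρ
    rw [ConjAct.mem_orbit_conjAct, Equiv.Perm.isConj_iff_cycleType_eq, fullCycleType_eq_iff]
  rw [Nat.card_congr e1, Nat.card_congr (orbitEquivQuotientStabilizer (ConjAct (Perm (Fin n))) σ)]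
  have h2 : Nat.card (ConjAct (Perm (Fin n)) ⧸ stabilizer (ConjAct (Perm (Fin n))) σ)
      = (stabilizer (ConjAct (Perm (Fin n))) σ).index := rfl
  rw [h2, mul_comm, Subgroup.card_mul_index]
  rw [Nat.card_congr (ConjAct.ofConjAct (G := Perm (Fin n))).toEquiv]
  rw [Nat.card_eq_fintype_card, Fintype.card_perm, Fintype.card_fin]

lemma card_stab_le (σ : Perm (Fin n)) :
    Nat.card (stabilizer (ConjAct (Perm (Fin n))) σ) ≤
      n ^ (Multiset.card (fullCycleType σ)) := by
  classical
  set Q := Quotient (Equiv.Perm.SameCycle.setoid σ) with hQ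
  have hc : ∀ (g : stabilizer (ConjAct (Perm (Fin n))) σ) (i : ℤ) (x : Fin n),
      ConjAct.ofConjAct (g : ConjAct (Perm (Fin n))) ((σ ^ i) x)
        = (σ ^ i) (ConjAct.ofConjAct (g : ConjAct (Perm (Fin n))) x) := by
    intro g i x
    have hmem := g.2
    rw [mem_stabilizer_iff, ConjAct.smul_def] at hmem
    rw [mul_inv_eq_iff_eq_mul] at hmem
    have hcomm : Commute (ConjAct.ofConjAct (g : ConjAct (Perm (Fin n)))) σ := hmem
    have h2 := (hcomm.zpow_right i).eq
    calc ConjAct.ofConjAct (g : ConjAct (Perm (Fin n))) ((σ ^ i) x)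
        = (ConjAct.ofConjAct (g : ConjAct (Perm (Fin n))) * σ ^ i) x := rfl
      _ = (σ ^ i * ConjAct.ofConjAct (g : ConjAct (Perm (Fin n)))) x := by rw [h2]
      _ = _ := rfl
  have hinj1 : Function.Injective
      (fun (g : stabilizer (ConjAct (Perm (Fin n))) σ) (q : Q) =>
        ConjAct.ofConjAct (g : ConjAct (Perm (Fin n))) q.out) := by
    intro g₁ g₂ h
    have hx : ∀ x : Fin n, ConjAct.ofConjAct (g₁ : ConjAct (Perm (Fin n))) x
        = ConjAct.ofConjAct (g₂ : ConjAct (Perm (Fin n))) x := by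
      intro x
      obtain ⟨i, hi⟩ : σ.SameCycle (Quotient.mk (Equiv.Perm.SameCycle.setoid σ) x).out x :=
        Quotient.mk_out (s := Equiv.Perm.SameCycle.setoid σ) x
      have hq := congrFun h (Quotient.mk (Equiv.Perm.SameCycle.setoid σ) x)
      simp only at hq
      rw [← hi, hc g₁, hc g₂, hq]
    apply Subtype.ext
    apply (ConjAct.ofConjAct (G := Perm (Fin n))).injective
    exact Equiv.ext hx
  have step1 : Nat.card (stabilizer (ConjAct (Perm (Fin n))) σ) ≤ Nat.card (Q → Fin n) :=
    Nat.card_le_card_of_injective _ hinj1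
  have step2 : Nat.card (Q → Fin n) = n ^ Nat.card Q := by
    rw [Nat.card_fun, Nat.card_eq_fintype_card, Fintype.card_fin]
  -- bound Nat.card Q
  have hinj2 : ∃ f : Q → ({c // c ∈ σ.cycleFactorsFinset} ⊕ {x : Fin n // σ x = x}),
      Function.Injective f := by
    refine ⟨fun q => if h : σ q.out = q.out then Sum.inr ⟨q.out, h⟩ else
      Sum.inl ⟨σ.cycleOf q.out, (Equiv.Perm.cycleOf_mem_cycleFactorsFinset_iff).2
        (Equiv.Perm.mem_support.2 h)⟩, ?_⟩
    intro q₁ q₂ h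
    by_cases h1 : σ q₁.out = q₁.out <;> by_cases h2 : σ q₂.out = q₂.out <;>
      simp only [h1, h2, dif_pos, dif_neg, not_false_iff] at h
    · have : q₁.out = q₂.out := by
        simpa using congrArg (fun s => Sum.elim (fun c => q₁.out) Subtype.val s) h
      exact Quotient.out_injective this
    · exact absurd h (by simp)
    · exact absurd h (by simp)
    · have hcyc : σ.cycleOf q₁.out = σ.cycleOf q₂.out := by
        simpa using congrArg (fun s => Sum.elim Subtype.val (fun c => σ.cycleOf q₁.out) s) h
      have hsc : σ.SameCycle q₁.out q₂.out := by
        have : q₂.out ∈ (σ.cycleOf q₂.out).support :=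
          Equiv.Perm.mem_support_cycleOf_iff.2 ⟨Equiv.Perm.SameCycle.refl _ _,
            Equiv.Perm.mem_support.2 h2⟩
        rw [← hcyc] at this
        exact (Equiv.Perm.mem_support_cycleOf_iff.1 this).1
      have : (Quotient.mk (Equiv.Perm.SameCycle.setoid σ) q₁.out : Q)
          = Quotient.mk (Equiv.Perm.SameCycle.setoid σ) q₂.out := Quotient.sound hsc
      rwa [Quotient.out_eq, Quotient.out_eq] at this
  obtain ⟨f, hf⟩ := hinj2
  have step3 : Nat.card Q ≤ Multiset.card (fullCycleType σ) := by
    have := Nat.card_le_card_of_injective f hf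
    rw [Nat.card_sum] at this
    have hA : Nat.card {c // c ∈ σ.cycleFactorsFinset} = Multiset.card σ.cycleType := by
      rw [Nat.card_eq_fintype_card, Fintype.card_coe, Equiv.Perm.cycleType]
      simp
    have hB : Nat.card {x : Fin n // σ x = x} = n - σ.support.card := by
      rw [Nat.card_eq_fintype_card, Fintype.card_subtype]
      have := Finset.card_filter_add_card_filter_not
        (s := (Finset.univ : Finset (Fin n))) (p := fun x => σ x = x)
      have hsupp : σ.support = Finset.univ.filter (fun x => ¬ σ x = x) := rfl
      have hn : (Finset.univ : Finset (Fin n)).card = n := by simp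
      rw [hsupp]
      omega
    rw [hA, hB] at this
    rw [card_fullCycleType]
    exact this
  calc Nat.card (stabilizer (ConjAct (Perm (Fin n))) σ) ≤ n ^ Nat.card Q := by
        rw [← step2]; exact step1
    _ ≤ n ^ (Multiset.card (fullCycleType σ)) := by
        by_cases hn : n = 0
        · subst hn
          have hb : Multiset.card (fullCycleType σ) = 0 := by
            have hσ : σ = 1 := Subsingleton.elim _ _
            subst hσ
            simp [fullCycleType]
          rw [hb] at step3 ⊢
          have hq : Nat.card Q = 0 := by omega
          rw [hq]
        · exact Nat.pow_le_pow_right (Nat.pos_of_ne_zero hn) step3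

end OrbStab

section Counting
variable {n : ℕ}

/-- number of permutations agreeing with `π` on at least `m` points is ≤ 2^n * n^(n-m) -/
lemma card_agree_le (π : Perm (Fin n)) (m : ℕ) :
    ((Finset.univ : Finset (Perm (Fin n))).filter
        (fun ρ => m ≤ (Finset.univ.filter (fun x => ρ x = π x)).card)).card
      ≤ 2 ^ n * n ^ (n - m) := by
  classical
  set S := (Finset.univ : Finset (Perm (Fin n))).filter
      (fun ρ => m ≤ (Finset.univ.filter (fun x => ρ x = π x)).card) with hS
  have hsub : S ⊆ (Finset.powersetCard m (Finset.univ : Finset (Fin n))).biUnion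
      (fun A => (Finset.univ : Finset (Perm (Fin n))).filter
        (fun ρ => ∀ x ∈ A, ρ x = π x)) := by
    intro ρ hρ
    rw [hS, Finset.mem_filter] at hρ
    obtain ⟨A, hA, hAcard⟩ := Finset.exists_subset_card_eq hρ.2
    rw [Finset.mem_biUnion]
    refine ⟨A, ?_, ?_⟩
    · rw [Finset.mem_powersetCard]
      exact ⟨Finset.subset_univ _, hAcard⟩
    · rw [Finset.mem_filter]
      exact ⟨Finset.mem_univ _, fun x hx => (Finset.mem_filter.1 (hA hx)).2⟩
  have h1 : S.card ≤ ∑ A ∈ Finset.powersetCard m (Finset.univ : Finset (Fin n)),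
      ((Finset.univ : Finset (Perm (Fin n))).filter (fun ρ => ∀ x ∈ A, ρ x = π x)).card :=
    le_trans (Finset.card_le_card hsub) (Finset.card_biUnion_le)
  have h2 : ∀ A ∈ Finset.powersetCard m (Finset.univ : Finset (Fin n)),
      ((Finset.univ : Finset (Perm (Fin n))).filter (fun ρ => ∀ x ∈ A, ρ x = π x)).card
        ≤ n ^ (n - m) := by
    intro A hA
    rw [Finset.mem_powersetCard] at hA
    have hinj : Set.InjOn (fun (ρ : Perm (Fin n)) => (fun x : {x // x ∈ Aᶜ} => ρ x.1))
        ((Finset.univ : Finset (Perm (Fin n))).filter (fun ρ => ∀ x ∈ A, ρ x = π x)) := by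
      intro ρ₁ h₁ ρ₂ h₂ heq
      rw [Finset.coe_filter] at h₁ h₂
      apply Equiv.ext
      intro x
      by_cases hx : x ∈ A
      · rw [h₁.2 x hx, h₂.2 x hx]
      · exact congrFun heq ⟨x, Finset.mem_compl.2 hx⟩
    calc ((Finset.univ : Finset (Perm (Fin n))).filter (fun ρ => ∀ x ∈ A, ρ x = π x)).card
        ≤ Fintype.card ({x // x ∈ Aᶜ} → Fin n) := by
          classical
          have := Finset.card_le_card_of_injOn _ (fun a ha => Finset.mem_univ _) hinj
          simpa using this
      _ = n ^ (n - m) := by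
          rw [Fintype.card_fun, Fintype.card_fin, Fintype.card_coe, Finset.card_compl,
            Fintype.card_fin, hA.2]
  calc S.card ≤ ∑ A ∈ Finset.powersetCard m (Finset.univ : Finset (Fin n)), n ^ (n - m) :=
        le_trans h1 (Finset.sum_le_sum h2)
    _ = (Finset.powersetCard m (Finset.univ : Finset (Fin n))).card * n ^ (n - m) := by
        rw [Finset.sum_const, smul_eq_mul]
    _ ≤ 2 ^ n * n ^ (n - m) := by
        apply Nat.mul_le_mul_right
        rw [Finset.card_powersetCard, Finset.card_univ, Fintype.card_fin]
        by_cases hm : m ≤ n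
        · calc Nat.choose n m ≤ ∑ i ∈ Finset.range (n + 1), Nat.choose n i :=
              Finset.single_le_sum (fun i _ => Nat.zero_le _)
                (Finset.mem_range.2 (Nat.lt_succ_of_le hm))
            _ = 2 ^ n := Nat.sum_range_choose n
        · rw [Nat.choose_eq_zero_of_lt (lt_of_not_ge hm)]
          exact Nat.zero_le _
end Counting

section Tau
variable {n : ℕ}

lemma comm_fix_eq_agree (σ τ : Perm (Fin n)) (x : Fin n) :
    ((σ * τ * σ⁻¹ * τ⁻¹) x = x) ↔ ((τ * σ⁻¹ * τ⁻¹) x = σ⁻¹ x) := by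
  simp only [Equiv.Perm.mul_apply]
  constructor
  · intro h
    have := congrArg (⇑σ⁻¹) h
    simpa using this
  · intro h
    have := congrArg (⇑σ) h
    simpa using this

lemma card_bad_tau_le (σ : Perm (Fin n)) (m : ℕ) :
    ((Finset.univ : Finset (Perm (Fin n))).filter
        (fun τ => m ≤ (Finset.univ.filter (fun x => (σ * τ * σ⁻¹ * τ⁻¹) x = x)).card)).card
      ≤ Nat.card (stabilizer (ConjAct (Perm (Fin n))) σ⁻¹) * (2 ^ n * n ^ (n - m)) := by
  classical
  set s := Nat.card (stabilizer (ConjAct (Perm (Fin n))) σ⁻¹) with hs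
  set T := (Finset.univ : Finset (Perm (Fin n))).filter
      (fun τ => m ≤ (Finset.univ.filter (fun x => (σ * τ * σ⁻¹ * τ⁻¹) x = x)).card) with hT
  have key : ∀ a ∈ T.image (fun τ => τ * σ⁻¹ * τ⁻¹),
      (T.filter (fun τ => τ * σ⁻¹ * τ⁻¹ = a)).card ≤ s := by
    intro a ha
    obtain ⟨τ₀, hτ₀, hτ₀a⟩ := Finset.mem_image.1 ha
    set F := T.filter (fun τ => τ * σ⁻¹ * τ⁻¹ = a) with hF
    have hinj : ∀ τ ∈ F, ∀ τ' ∈ F, τ₀⁻¹ * τ = τ₀⁻¹ * τ' → τ = τ' := by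
      intro τ _ τ' _ h
      exact mul_left_cancel h
    have hmem : ∀ τ ∈ F, ConjAct.toConjAct (τ₀⁻¹ * τ) ∈
        stabilizer (ConjAct (Perm (Fin n))) σ⁻¹ := by
      intro τ hτ
      rw [hF, Finset.mem_filter] at hτ
      rw [mem_stabilizer_iff, ConjAct.smul_def, ConjAct.ofConjAct_toConjAct]
      have h1 : τ * σ⁻¹ * τ⁻¹ = τ₀ * σ⁻¹ * τ₀⁻¹ := by rw [hτ.2, hτ₀a]
      calc τ₀⁻¹ * τ * σ⁻¹ * (τ₀⁻¹ * τ)⁻¹ = τ₀⁻¹ * (τ * σ⁻¹ * τ⁻¹) * τ₀ := by group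
        _ = τ₀⁻¹ * (τ₀ * σ⁻¹ * τ₀⁻¹) * τ₀ := by rw [h1]
        _ = σ⁻¹ := by group
    -- injection from F into the stabilizer
    have hg : Function.Injective (fun t : {τ // τ ∈ F} =>
        (⟨ConjAct.toConjAct (τ₀⁻¹ * t.1), hmem t.1 t.2⟩ :
          stabilizer (ConjAct (Perm (Fin n))) σ⁻¹)) := by
      intro t₁ t₂ h
      have h1 : ConjAct.toConjAct (τ₀⁻¹ * t₁.1) = ConjAct.toConjAct (τ₀⁻¹ * t₂.1) :=
        congrArg Subtype.val h
      have h2 : τ₀⁻¹ * t₁.1 = τ₀⁻¹ * t₂.1 := ConjAct.toConjAct.injective h1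
      exact Subtype.ext (mul_left_cancel h2)
    have : F.card ≤ s := by
      have h3 : Nat.card {τ // τ ∈ F} ≤ s := Nat.card_le_card_of_injective _ hg
      rwa [Nat.card_eq_fintype_card, Fintype.card_coe] at h3
    exact this
  have himage : T.image (fun τ => τ * σ⁻¹ * τ⁻¹) ⊆
      (Finset.univ : Finset (Perm (Fin n))).filter
        (fun ρ => m ≤ (Finset.univ.filter (fun x => ρ x = σ⁻¹ x)).card) := by
    intro a ha
    obtain ⟨τ, hτ, rfl⟩ := Finset.mem_image.1 ha
    rw [hT, Finset.mem_filter] at hτ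
    rw [Finset.mem_filter]
    refine ⟨Finset.mem_univ _, ?_⟩
    have : (Finset.univ.filter (fun x => (σ * τ * σ⁻¹ * τ⁻¹) x = x))
        = (Finset.univ.filter (fun x => (τ * σ⁻¹ * τ⁻¹) x = σ⁻¹ x)) := by
      apply Finset.filter_congr
      intro x _
      exact comm_fix_eq_agree σ τ x
    rw [← this]
    exact hτ.2
  calc T.card ≤ s * (T.image (fun τ => τ * σ⁻¹ * τ⁻¹)).card :=
        Finset.card_le_mul_card_image T s key
    _ ≤ s * (2 ^ n * n ^ (n - m)) := by
        apply Nat.mul_le_mul_left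
        exact le_trans (Finset.card_le_card himage) (card_agree_le σ⁻¹ m)

end Tau

section Assemble
variable {n : ℕ}

lemma bad_le (μ : Multiset ℕ) :
    Nat.card {p : Equiv.Perm (Fin n) × Equiv.Perm (Fin n) //
        fullCycleType p.1 = μ ∧
        ¬ (n > 2 * Nat.card {x : Fin n // (p.1 * p.2 * p.1⁻¹ * p.2⁻¹) x = x})} *
      Nat.card {σ : Perm (Fin n) // fullCycleType σ = μ}
    ≤ Nat.card {σ : Perm (Fin n) // fullCycleType σ = μ} *
      (n.factorial * (2 ^ n * n ^ (n - (n + 1) / 2))) := by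
  classical
  set m := (n + 1) / 2 with hm
  set X := 2 ^ n * n ^ (n - m) with hX
  set Kfin := (Finset.univ : Finset (Perm (Fin n))).filter (fun σ => fullCycleType σ = μ)
    with hKfin
  have hN : Nat.card {σ : Perm (Fin n) // fullCycleType σ = μ} = Kfin.card := by
    rw [Nat.card_eq_fintype_card, Fintype.card_subtype]
  have hfix : ∀ (p : Perm (Fin n) × Perm (Fin n)),
      Nat.card {x : Fin n // (p.1 * p.2 * p.1⁻¹ * p.2⁻¹) x = x}
        = (Finset.univ.filter (fun x => (p.1 * p.2 * p.1⁻¹ * p.2⁻¹) x = x)).card := by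
    intro p
    rw [Nat.card_eq_fintype_card, Fintype.card_subtype]
  have hB : Nat.card {p : Equiv.Perm (Fin n) × Equiv.Perm (Fin n) //
        fullCycleType p.1 = μ ∧
        ¬ (n > 2 * Nat.card {x : Fin n // (p.1 * p.2 * p.1⁻¹ * p.2⁻¹) x = x})}
      = ((Finset.univ : Finset (Perm (Fin n) × Perm (Fin n))).filter
          (fun p => fullCycleType p.1 = μ ∧
            m ≤ (Finset.univ.filter
              (fun x => (p.1 * p.2 * p.1⁻¹ * p.2⁻¹) x = x)).card)).card := by
    rw [Nat.card_eq_fintype_card, Fintype.card_subtype]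
    congr 1
    apply Finset.filter_congr
    intro p _
    rw [hfix p]
    constructor
    · rintro ⟨h1, h2⟩; exact ⟨h1, by omega⟩
    · rintro ⟨h1, h2⟩; exact ⟨h1, by omega⟩
  rw [hB, hN]
  set Bfin := (Finset.univ : Finset (Perm (Fin n) × Perm (Fin n))).filter
      (fun p => fullCycleType p.1 = μ ∧
        m ≤ (Finset.univ.filter (fun x => (p.1 * p.2 * p.1⁻¹ * p.2⁻¹) x = x)).card) with hBfin
  have hfiber : Bfin.card = ∑ σ ∈ Kfin, (Bfin.filter (fun p => p.1 = σ)).card := by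
    apply Finset.card_eq_sum_card_fiberwise
    intro p hp
    rw [hBfin, Finset.mem_coe, Finset.mem_filter] at hp
    rw [hKfin, Finset.mem_coe, Finset.mem_filter]
    exact ⟨Finset.mem_univ _, hp.2.1⟩
  have hper : ∀ σ ∈ Kfin, (Bfin.filter (fun p => p.1 = σ)).card ≤
      Nat.card (stabilizer (ConjAct (Perm (Fin n))) σ⁻¹) * X := by
    intro σ hσ
    have step : (Bfin.filter (fun p => p.1 = σ)).card ≤
        ((Finset.univ : Finset (Perm (Fin n))).filter
          (fun τ => m ≤ (Finset.univ.filter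
            (fun x => (σ * τ * σ⁻¹ * τ⁻¹) x = x)).card)).card := by
      apply Finset.card_le_card_of_injOn (f := fun p => p.2)
      · intro p hp
        rw [Finset.mem_coe, Finset.mem_filter] at hp
        obtain ⟨hp1, hp2⟩ := hp
        rw [hBfin, Finset.mem_filter] at hp1
        rw [Finset.mem_coe, Finset.mem_filter]
        refine ⟨Finset.mem_univ _, ?_⟩
        have := hp1.2.2
        rwa [hp2] at this
      · intro p h₁ q h₂ h
        rw [Finset.coe_filter] at h₁ h₂
        simp only [Set.mem_setOf_eq] at h₁ h₂
        exact Prod.ext (h₁.2.trans h₂.2.symm) h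
    exact le_trans step (card_bad_tau_le σ m)
  have hstab : ∀ σ ∈ Kfin, Kfin.card * Nat.card (stabilizer (ConjAct (Perm (Fin n))) σ⁻¹)
      = n.factorial := by
    intro σ hσ
    rw [hKfin, Finset.mem_filter] at hσ
    have h1 := card_orbit_mul_card_stab (σ := σ⁻¹)
    rw [fullCycleType_inv, hσ.2] at h1
    rw [← hN]
    exact h1
  calc Bfin.card * Kfin.card
      = (∑ σ ∈ Kfin, (Bfin.filter (fun p => p.1 = σ)).card) * Kfin.card := by rw [hfiber]
    _ ≤ (∑ σ ∈ Kfin, Nat.card (stabilizer (ConjAct (Perm (Fin n))) σ⁻¹) * X) * Kfin.card := by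
        apply Nat.mul_le_mul_right
        exact Finset.sum_le_sum hper
    _ = ∑ σ ∈ Kfin, Kfin.card * Nat.card (stabilizer (ConjAct (Perm (Fin n))) σ⁻¹) * X := by
        rw [Finset.sum_mul]
        apply Finset.sum_congr rfl
        intro σ _
        ring
    _ = ∑ σ ∈ Kfin, n.factorial * X := by
        apply Finset.sum_congr rfl
        intro σ hσ
        rw [hstab σ hσ]
    _ = Kfin.card * (n.factorial * X) := by
        rw [Finset.sum_const, smul_eq_mul]

end Assemble

section Totals
variable {n : ℕ}

lemma total_card (μ : Multiset ℕ) :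
    Nat.card {p : Perm (Fin n) × Perm (Fin n) // fullCycleType p.1 = μ}
      = Nat.card {σ : Perm (Fin n) // fullCycleType σ = μ} * n.factorial := by
  classical
  have e : {p : Perm (Fin n) × Perm (Fin n) // fullCycleType p.1 = μ}
      ≃ {σ : Perm (Fin n) // fullCycleType σ = μ} × Perm (Fin n) :=
    { toFun := fun p => (⟨p.1.1, p.2⟩, p.1.2)
      invFun := fun q => ⟨(q.1.1, q.2), q.1.2⟩
      left_inv := fun p => rfl
      right_inv := fun q => rfl }
  rw [Nat.card_congr e, Nat.card_prod, Nat.card_eq_fintype_card (α := Perm (Fin n)),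
    Fintype.card_perm, Fintype.card_fin]

lemma good_add_bad (μ : Multiset ℕ) :
    Nat.card {p : Perm (Fin n) × Perm (Fin n) //
        fullCycleType p.1 = μ ∧
        n > 2 * Nat.card {x : Fin n // (p.1 * p.2 * p.1⁻¹ * p.2⁻¹) x = x}}
      + Nat.card {p : Perm (Fin n) × Perm (Fin n) //
        fullCycleType p.1 = μ ∧
        ¬ (n > 2 * Nat.card {x : Fin n // (p.1 * p.2 * p.1⁻¹ * p.2⁻¹) x = x})}
      = Nat.card {p : Perm (Fin n) × Perm (Fin n) // fullCycleType p.1 = μ} := by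
  classical
  simp only [Nat.card_eq_fintype_card, Fintype.card_subtype]
  rw [← Finset.card_filter_add_card_filter_not
    (s := (Finset.univ : Finset (Perm (Fin n) × Perm (Fin n))).filter
      (fun p => fullCycleType p.1 = μ))
    (p := fun p => n > 2 * Nat.card {x : Fin n // (p.1 * p.2 * p.1⁻¹ * p.2⁻¹) x = x})]
  congr 1 <;> rw [Finset.filter_filter] <;>
    · apply congrArg
      apply Finset.filter_congr
      intro p _
      simp [Nat.card_eq_fintype_card, Fintype.card_subtype]
      intro _
      congr!

lemma N_pos (μ : Multiset ℕ) (hsum : μ.sum = n) (hpos : ∀ k ∈ μ, 1 ≤ k) :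
    0 < Nat.card {σ : Perm (Fin n) // fullCycleType σ = μ} := by
  obtain ⟨σ, hσ⟩ := exists_fullCycleType_eq μ hsum hpos
  have : Nonempty {σ : Perm (Fin n) // fullCycleType σ = μ} := ⟨⟨σ, hσ⟩⟩
  exact Nat.card_pos

lemma fact_le_N_mul (μ : Multiset ℕ) (hsum : μ.sum = n) (hpos : ∀ k ∈ μ, 1 ≤ k) :
    n.factorial ≤ Nat.card {σ : Perm (Fin n) // fullCycleType σ = μ}
      * n ^ (Multiset.card μ) := by
  obtain ⟨σ, hσ⟩ := exists_fullCycleType_eq μ hsum hpos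
  have h1 := card_orbit_mul_card_stab σ
  rw [hσ] at h1
  calc n.factorial = Nat.card {ρ : Perm (Fin n) // fullCycleType ρ = μ}
        * Nat.card (stabilizer (ConjAct (Perm (Fin n))) σ) := h1.symm
    _ ≤ _ := by
        apply Nat.mul_le_mul_left
        have := card_stab_le σ
        rwa [hσ] at this

end Totals

section Analytic

lemma factorial_lower (n : ℕ) :
    (n / 4 + 1) ^ (n / 2 - n / 4) * (n / 2 + 1) ^ (n - n / 2) ≤ n.factorial := by
  have h1 : (n / 4).factorial * (n / 4 + 1) ^ (n / 2 - n / 4) ≤ (n / 2).factorial := by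
    have := Nat.factorial_mul_pow_le_factorial (m := n / 4) (n := n / 2 - n / 4)
    have heq : n / 4 + (n / 2 - n / 4) = n / 2 := by omega
    rwa [heq] at this
  have h2 : (n / 2).factorial * (n / 2 + 1) ^ (n - n / 2) ≤ n.factorial := by
    have := Nat.factorial_mul_pow_le_factorial (m := n / 2) (n := n - n / 2)
    have heq : n / 2 + (n - n / 2) = n := by omega
    rwa [heq] at this
  calc (n / 4 + 1) ^ (n / 2 - n / 4) * (n / 2 + 1) ^ (n - n / 2)
      ≤ ((n / 4).factorial * (n / 4 + 1) ^ (n / 2 - n / 4)) * (n / 2 + 1) ^ (n - n / 2) := by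
        apply Nat.mul_le_mul_right
        exact Nat.le_mul_of_pos_left _ (Nat.factorial_pos _)
    _ ≤ (n / 2).factorial * (n / 2 + 1) ^ (n - n / 2) := Nat.mul_le_mul_right _ h1
    _ ≤ n.factorial := h2

lemma analytic (α : ℝ) (hα0 : 0 ≤ α) (hα1 : α ≤ 1 / 2) (n : ℕ) (hn : 2 ^ 64 ≤ n)
    (c : ℕ) (hc : (c : ℝ) ≤ (n : ℝ) ^ α) :
    ((2 ^ n * n ^ (n - (n + 1) / 2) : ℕ) : ℝ) * (n : ℝ) ^ c * (2 : ℝ) ^ ((n : ℝ) / 2)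
      ≤ (n : ℝ) ^ 2 * (n.factorial : ℝ) := by
  have hx64 : ((2 : ℝ)) ^ (64 : ℕ) ≤ (n : ℝ) := by
    calc ((2:ℝ))^(64:ℕ) = ((2^64 : ℕ) : ℝ) := by norm_num
      _ ≤ (n : ℝ) := Nat.cast_le.2 hn
  set x := (n : ℝ) with hxdef
  have hx : (2:ℝ)^(64:ℕ) ≤ x := hx64
  have hxbig : (18446744073709551616 : ℝ) ≤ x := by norm_num at hx ⊢; linarith
  have hx0 : (0:ℝ) < x := by linarith
  have hx1 : (1:ℝ) ≤ x := by linarith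
  set s := Real.sqrt x with hs
  have hs0 : 0 ≤ s := Real.sqrt_nonneg x
  have hs2 : s ^ 2 = x := Real.sq_sqrt (le_of_lt hx0)
  have hs32 : 32 * s ≤ x := by nlinarith
  have hs4 : 4 * s ≤ x := by nlinarith
  -- bound (c:ℝ) ≤ s
  have hcs : (c : ℝ) ≤ s := by
    calc (c:ℝ) ≤ x ^ α := hc
      _ ≤ x ^ (1/2 : ℝ) := Real.rpow_le_rpow_of_exponent_le hx1 hα1
      _ = s := (Real.sqrt_eq_rpow x).symm
  have hq : (2:ℝ)^(62:ℕ) ≤ x / 4 := by norm_num; linarith [hxbig]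
  have hq1 : (1:ℝ) ≤ x / 4 := by linarith
  -- (i)
  have hi : (2:ℝ) ^ (2*x) ≤ (x/4) ^ (x/16) := by
    calc (2:ℝ) ^ (2*x) ≤ (2:ℝ) ^ ((62:ℝ) * (x/16)) :=
          Real.rpow_le_rpow_of_exponent_le one_le_two (by linarith)
      _ = ((2:ℝ) ^ (62:ℝ)) ^ (x/16) := Real.rpow_mul (by norm_num) _ _
      _ ≤ (x/4) ^ (x/16) := by
          apply Real.rpow_le_rpow (Real.rpow_nonneg (by norm_num) _) _ (by linarith)
          rw [show (62:ℝ) = ((62:ℕ):ℝ) by norm_num, Real.rpow_natCast]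
          exact hq
  -- (ii)
  have hii : x ^ s ≤ (x/4) ^ (x/16) := by
    calc x ^ s ≤ x ^ (x/32) := Real.rpow_le_rpow_of_exponent_le hx1 (by linarith)
      _ = (x ^ (1/2 : ℝ)) ^ (x/16) := by
          rw [← Real.rpow_mul (le_of_lt hx0)]
          norm_num
          ring_nf
      _ = s ^ (x/16) := by rw [← Real.sqrt_eq_rpow]
      _ ≤ (x/4) ^ (x/16) := Real.rpow_le_rpow hs0 (by linarith) (by linarith)
  have key2 : (2:ℝ) ^ (2*x) * x ^ s ≤ (x/4) ^ (x/8) := by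
    calc (2:ℝ) ^ (2*x) * x ^ s ≤ (x/4) ^ (x/16) * (x/4) ^ (x/16) :=
          mul_le_mul hi hii (Real.rpow_nonneg (le_of_lt hx0) _)
            (Real.rpow_nonneg (by linarith) _)
      _ = (x/4) ^ (x/16 + x/16) := (Real.rpow_add (by linarith) _ _).symm
      _ = (x/4) ^ (x/8) := by ring_nf
  -- factorial lower bound in ℝ
  set a₁ := n / 2 - n / 4 with ha₁
  set a₂ := n - n / 2 with ha₂
  have hfact : ((n.factorial : ℕ) : ℝ) ≥ (x/4) ^ (x/8) * (x/2) ^ (x/2) := by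
    have hℕ := factorial_lower n
    have hcast : (((n / 4 + 1) ^ a₁ * (n / 2 + 1) ^ a₂ : ℕ) : ℝ) ≤ (n.factorial : ℝ) :=
      Nat.cast_le.2 hℕ
    push_cast at hcast
    have hn8 : 8 ≤ n := le_trans (by norm_num) hn
    have hb₁ : x / 4 ≤ ((n / 4 + 1 : ℕ) : ℝ) := by
      have : n ≤ 4 * (n / 4 + 1) := by omega
      have := (Nat.cast_le (α := ℝ)).2 this
      push_cast at this ⊢
      linarith
    have ha₁' : x / 8 ≤ ((a₁ : ℕ) : ℝ) := by
      have : n ≤ 8 * a₁ := by omega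
      have := (Nat.cast_le (α := ℝ)).2 this
      push_cast at this ⊢
      linarith
    have hb₂ : x / 2 ≤ ((n / 2 + 1 : ℕ) : ℝ) := by
      have : n ≤ 2 * (n / 2 + 1) := by omega
      have := (Nat.cast_le (α := ℝ)).2 this
      push_cast at this ⊢
      linarith
    have ha₂' : x / 2 ≤ ((a₂ : ℕ) : ℝ) := by
      have : n ≤ 2 * a₂ := by omega
      have := (Nat.cast_le (α := ℝ)).2 this
      push_cast at this ⊢
      linarith
    have hf1 : (x/4) ^ (x/8) ≤ ((n / 4 + 1 : ℕ) : ℝ) ^ (a₁ : ℕ) := by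
      calc (x/4) ^ (x/8) ≤ (x/4) ^ ((a₁ : ℕ) : ℝ) :=
            Real.rpow_le_rpow_of_exponent_le hq1 ha₁'
        _ ≤ ((n / 4 + 1 : ℕ) : ℝ) ^ ((a₁ : ℕ) : ℝ) :=
            Real.rpow_le_rpow (by linarith) hb₁ (Nat.cast_nonneg _)
        _ = ((n / 4 + 1 : ℕ) : ℝ) ^ (a₁ : ℕ) := Real.rpow_natCast _ _
    have hq2 : (1:ℝ) ≤ x / 2 := by linarith
    have hf2 : (x/2) ^ (x/2) ≤ ((n / 2 + 1 : ℕ) : ℝ) ^ (a₂ : ℕ) := by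
      calc (x/2) ^ (x/2) ≤ (x/2) ^ ((a₂ : ℕ) : ℝ) :=
            Real.rpow_le_rpow_of_exponent_le hq2 ha₂'
        _ ≤ ((n / 2 + 1 : ℕ) : ℝ) ^ ((a₂ : ℕ) : ℝ) :=
            Real.rpow_le_rpow (by linarith) hb₂ (Nat.cast_nonneg _)
        _ = ((n / 2 + 1 : ℕ) : ℝ) ^ (a₂ : ℕ) := Real.rpow_natCast _ _
    calc (x/4) ^ (x/8) * (x/2) ^ (x/2)
        ≤ ((n / 4 + 1 : ℕ) : ℝ) ^ (a₁ : ℕ) * ((n / 2 + 1 : ℕ) : ℝ) ^ (a₂ : ℕ) :=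
          mul_le_mul hf1 hf2 (Real.rpow_nonneg (by linarith) _) (by positivity)
      _ ≤ (n.factorial : ℝ) := by push_cast; exact_mod_cast hcast
  -- final combination
  have h2pos : (0:ℝ) < (2:ℝ) ^ (x/2) := Real.rpow_pos_of_pos two_pos _
  have hx2 : (1:ℝ) ≤ x ^ 2 := by nlinarith
  have e1 : (x/2) ^ (x/2) = x ^ (x/2) / (2:ℝ) ^ (x/2) := by
    rw [Real.div_rpow (le_of_lt hx0) (by norm_num)]
  have e2 : (2:ℝ) ^ (2*x) = (2:ℝ)^x * (2:ℝ)^(x/2) * (2:ℝ)^(x/2) := by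
    rw [← Real.rpow_add two_pos, ← Real.rpow_add two_pos]
    congr 1
    ring
  have key3 : (2:ℝ)^(2*x) * x^s * x^(x/2) ≤ x^2 * (x/4)^(x/8) * x^(x/2) := by
    have h' : (2:ℝ)^(2*x) * x^s ≤ x^2 * (x/4)^(x/8) := by
      calc (2:ℝ)^(2*x) * x^s ≤ (x/4)^(x/8) := key2
        _ ≤ x^2 * (x/4)^(x/8) :=
          le_mul_of_one_le_left (Real.rpow_nonneg (by linarith) _) hx2
    exact mul_le_mul_of_nonneg_right h' (Real.rpow_nonneg (le_of_lt hx0) _)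
  have middle : (2:ℝ)^x * x^(x/2) * x^s * (2:ℝ)^(x/2)
      ≤ x^2 * ((x/4)^(x/8) * (x/2)^(x/2)) := by
    rw [e1]
    have e3 : x^2 * ((x/4)^(x/8) * (x ^ (x/2) / (2:ℝ)^(x/2)))
        = (x^2 * (x/4)^(x/8) * x^(x/2)) / (2:ℝ)^(x/2) := by ring
    rw [e3, le_div_iff₀ h2pos]
    calc (2:ℝ)^x * x^(x/2) * x^s * (2:ℝ)^(x/2) * (2:ℝ)^(x/2)
        = ((2:ℝ)^x * (2:ℝ)^(x/2) * (2:ℝ)^(x/2)) * x^s * x^(x/2) := by ring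
      _ = (2:ℝ)^(2*x) * x^s * x^(x/2) := by rw [← e2]
      _ ≤ x^2 * (x/4)^(x/8) * x^(x/2) := key3
  -- cast bounds
  have hk : ((n - (n+1)/2 : ℕ) : ℝ) ≤ x / 2 := by
    have : 2 * (n - (n+1)/2) ≤ n := by omega
    have := (Nat.cast_le (α := ℝ)).2 this
    push_cast at this
    linarith
  have hc2 : ((n ^ (n - (n+1)/2) : ℕ) : ℝ) ≤ x ^ (x/2) := by
    push_cast
    rw [← Real.rpow_natCast x]
    exact Real.rpow_le_rpow_of_exponent_le hx1 hk
  have hc3 : x ^ c ≤ x ^ s := by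
    rw [← Real.rpow_natCast x c]
    exact Real.rpow_le_rpow_of_exponent_le hx1 hcs
  have hc1 : ((2 ^ n : ℕ) : ℝ) = (2:ℝ) ^ x := by
    push_cast
    rw [← Real.rpow_natCast 2 n]
  calc ((2 ^ n * n ^ (n - (n + 1) / 2) : ℕ) : ℝ) * x ^ c * (2:ℝ) ^ (x/2)
      = ((2 ^ n : ℕ) : ℝ) * ((n ^ (n - (n+1)/2) : ℕ) : ℝ) * x ^ c * (2:ℝ) ^ (x/2) := by
        push_cast
        ring
    _ ≤ (2:ℝ)^x * x^(x/2) * x^s * (2:ℝ)^(x/2) := by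
        rw [hc1]
        have hnn : (0:ℝ) ≤ (2:ℝ)^x := Real.rpow_nonneg (by norm_num) _
        apply mul_le_mul_of_nonneg_right _ (le_of_lt h2pos)
        apply mul_le_mul _ hc3 (by positivity) (by positivity)
        exact mul_le_mul_of_nonneg_left hc2 hnn
    _ ≤ x^2 * ((x/4)^(x/8) * (x/2)^(x/2)) := middle
    _ ≤ x^2 * (n.factorial : ℝ) := mul_le_mul_of_nonneg_left hfact (by positivity)

end Analytic


lemma stmt16_aux (α : ℝ) (hα0 : 0 ≤ α) (hα1 : α < 1 / 2) (C : ℝ) (hC1 : 1 ≤ C)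
    (hCn : ∀ n : ℕ, n < 2 ^ 64 → (2:ℝ) ^ ((n:ℝ)/2) ≤ C) :
    ∀ n : ℕ, 1 ≤ n → ∀ μ : Multiset ℕ,
      μ.sum = n → (∀ k ∈ μ, 1 ≤ k) → (Multiset.card μ : ℝ) ≤ (n : ℝ) ^ α →
      (Nat.card {p : Equiv.Perm (Fin n) × Equiv.Perm (Fin n) //
            fullCycleType p.1 = μ ∧
            n > 2 * Nat.card {x : Fin n // (p.1 * p.2 * p.1⁻¹ * p.2⁻¹) x = x}} : ℝ)
          / ((Nat.card {σ : Equiv.Perm (Fin n) // fullCycleType σ = μ} : ℝ)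
              * (n.factorial : ℝ))
        ≥ 1 - C * (n : ℝ) ^ 2 / (2 : ℝ) ^ ((n : ℝ) / 2) := by
  intro n hn μ hsum hpos hcard
  have hx1 : (1:ℝ) ≤ (n:ℝ) := by exact_mod_cast hn
  have hrp : (0:ℝ) < (2:ℝ) ^ ((n:ℝ)/2) := Real.rpow_pos_of_pos two_pos _
  have hn2 : (1:ℝ) ≤ (n:ℝ)^2 := by nlinarith
  by_cases hbig : 2^64 ≤ n
  · -- main case
    set K := Nat.card {σ : Equiv.Perm (Fin n) // fullCycleType σ = μ} with hK
    set B := Nat.card {p : Equiv.Perm (Fin n) × Equiv.Perm (Fin n) //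
        fullCycleType p.1 = μ ∧
        ¬ (n > 2 * Nat.card {x : Fin n // (p.1 * p.2 * p.1⁻¹ * p.2⁻¹) x = x})} with hB
    set G := Nat.card {p : Equiv.Perm (Fin n) × Equiv.Perm (Fin n) //
        fullCycleType p.1 = μ ∧
        n > 2 * Nat.card {x : Fin n // (p.1 * p.2 * p.1⁻¹ * p.2⁻¹) x = x}} with hG
    have hNpos : 0 < K := N_pos μ hsum hpos
    have hKr : (0:ℝ) < (K:ℝ) := by exact_mod_cast hNpos
    have hfr : (0:ℝ) < (n.factorial : ℝ) := by exact_mod_cast n.factorial_pos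
    have hD : (0:ℝ) < (K:ℝ) * (n.factorial : ℝ) := mul_pos hKr hfr
    have htot : G + B = K * n.factorial := by
      rw [hG, hB, hK, good_add_bad μ, total_card μ]
    have hBle : B ≤ n.factorial * (2 ^ n * n ^ (n - (n + 1) / 2)) := by
      have h := bad_le (n := n) μ
      rw [← hB, ← hK] at h
      rw [mul_comm K _] at h
      exact Nat.le_of_mul_le_mul_right h hNpos
    have hfactle : n.factorial ≤ K * n ^ (Multiset.card μ) := fact_le_N_mul μ hsum hpos
    have hana := analytic α hα0 (le_of_lt hα1) n hbig (Multiset.card μ) hcard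
    -- real inequality B/(K * n!) ≤ n^2 / 2^(n/2)
    have hmain : (B:ℝ) / ((K:ℝ) * (n.factorial : ℝ)) ≤ (n:ℝ)^2 / (2:ℝ) ^ ((n:ℝ)/2) := by
      rw [div_le_div_iff₀ hD hrp]
      have s1 : (B:ℝ) ≤ (n.factorial : ℝ) * ((2 ^ n * n ^ (n - (n + 1) / 2) : ℕ) : ℝ) := by
        exact_mod_cast hBle
      have s2 : (n.factorial : ℝ) ≤ (K:ℝ) * (n:ℝ) ^ (Multiset.card μ) := by
        exact_mod_cast hfactle
      have hXnn : (0:ℝ) ≤ ((2 ^ n * n ^ (n - (n + 1) / 2) : ℕ) : ℝ) := Nat.cast_nonneg _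
      calc (B:ℝ) * (2:ℝ) ^ ((n:ℝ)/2)
          ≤ ((n.factorial : ℝ) * ((2 ^ n * n ^ (n - (n + 1) / 2) : ℕ) : ℝ))
            * (2:ℝ) ^ ((n:ℝ)/2) := mul_le_mul_of_nonneg_right s1 (le_of_lt hrp)
        _ ≤ (((K:ℝ) * (n:ℝ) ^ (Multiset.card μ)) * ((2 ^ n * n ^ (n - (n + 1) / 2) : ℕ) : ℝ))
            * (2:ℝ) ^ ((n:ℝ)/2) := by
            apply mul_le_mul_of_nonneg_right _ (le_of_lt hrp)
            exact mul_le_mul_of_nonneg_right s2 hXnn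
        _ = (K:ℝ) * (((2 ^ n * n ^ (n - (n + 1) / 2) : ℕ) : ℝ) * (n:ℝ) ^ (Multiset.card μ)
            * (2:ℝ) ^ ((n:ℝ)/2)) := by ring
        _ ≤ (K:ℝ) * ((n:ℝ)^2 * (n.factorial : ℝ)) := mul_le_mul_of_nonneg_left hana
            (le_of_lt hKr)
        _ = (n:ℝ)^2 * ((K:ℝ) * (n.factorial : ℝ)) := by ring
    have hGeq : (G:ℝ) = (K:ℝ) * (n.factorial : ℝ) - (B:ℝ) := by
      have : ((G + B : ℕ) : ℝ) = ((K * n.factorial : ℕ) : ℝ) := by rw [htot]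
      push_cast at this
      linarith
    rw [hGeq]
    have hfinal : (B:ℝ) / ((K:ℝ) * (n.factorial : ℝ)) ≤ C * (n:ℝ)^2 / (2:ℝ) ^ ((n:ℝ)/2) := by
      calc (B:ℝ) / ((K:ℝ) * (n.factorial : ℝ)) ≤ (n:ℝ)^2 / (2:ℝ) ^ ((n:ℝ)/2) := hmain
        _ ≤ C * (n:ℝ)^2 / (2:ℝ) ^ ((n:ℝ)/2) := by
            apply (div_le_div_iff_of_pos_right hrp).2
            exact le_mul_of_one_le_left (by positivity) hC1
    rw [ge_iff_le, sub_div, div_self (ne_of_gt hD)]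
    linarith
  · -- small case
    have h1 : (2:ℝ) ^ ((n:ℝ)/2) ≤ C := hCn n (lt_of_not_ge hbig)
    have h2 : (1:ℝ) ≤ C * (n:ℝ)^2 / (2:ℝ) ^ ((n:ℝ)/2) := by
      rw [le_div_iff₀ hrp, one_mul]
      calc (2:ℝ) ^ ((n:ℝ)/2) ≤ C := h1
        _ ≤ C * (n:ℝ)^2 := le_mul_of_one_le_right (by linarith) hn2
    have h3 : (0:ℝ) ≤ (Nat.card {p : Equiv.Perm (Fin n) × Equiv.Perm (Fin n) //
            fullCycleType p.1 = μ ∧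
            n > 2 * Nat.card {x : Fin n // (p.1 * p.2 * p.1⁻¹ * p.2⁻¹) x = x}} : ℝ)
          / ((Nat.card {σ : Equiv.Perm (Fin n) // fullCycleType σ = μ} : ℝ)
              * (n.factorial : ℝ)) := by positivity
    linarith

theorem stmt_16 (α : ℝ) (hα0 : 0 ≤ α) (hα1 : α < 1 / 2) :
    ∃ C : ℝ, 0 < C ∧ ∀ n : ℕ, 1 ≤ n → ∀ μ : Multiset ℕ,
      μ.sum = n → (∀ k ∈ μ, 1 ≤ k) → (Multiset.card μ : ℝ) ≤ (n : ℝ) ^ α →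
      (Nat.card {p : Equiv.Perm (Fin n) × Equiv.Perm (Fin n) //
            fullCycleType p.1 = μ ∧
            n > 2 * Nat.card {x : Fin n // (p.1 * p.2 * p.1⁻¹ * p.2⁻¹) x = x}} : ℝ)
          / ((Nat.card {σ : Equiv.Perm (Fin n) // fullCycleType σ = μ} : ℝ)
              * (n.factorial : ℝ))
        ≥ 1 - C * (n : ℝ) ^ 2 / (2 : ℝ) ^ ((n : ℝ) / 2) := by
  refine ⟨(2:ℝ) ^ (((2^64 : ℕ) : ℝ) / 2), Real.rpow_pos_of_pos two_pos _, ?_⟩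
  apply stmt16_aux α hα0 hα1
  · have := Real.rpow_le_rpow_of_exponent_le one_le_two
      (show (0:ℝ) ≤ ((2^64 : ℕ) : ℝ) / 2 from div_nonneg (Nat.cast_nonneg _) two_pos.le)
    rwa [Real.rpow_zero] at this
  · intro k hk
    apply Real.rpow_le_rpow_of_exponent_le one_le_two
    have : (k:ℝ) ≤ ((2^64 : ℕ) : ℝ) := Nat.cast_le.2 (le_of_lt hk)
    exact (div_le_div_iff_of_pos_right two_pos).2 this
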